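/- If a continuous map f : I → I of a compact interval has a periodic point of least period 2^k for some k ≥ 2, then f has a periodic point of least period 2^{k-1}. -/

import Mathlib

open Set

/-- IVT fixed point: if ψ is below the identity somewhere and above it somewhere
on an interval, it has a fixed point there. -/
lemma fix_of_crossing {s t : ℝ} (ψ : ℝ → ℝ) (hc : ContinuousOn ψ (Set.Icc s t))
    {c1 c2 : ℝ} (h1 : c1 ∈ Set.Icc s t) (h2 : c2 ∈ Set.Icc s t)
    (hle : ψ c1 ≤ c1) (hge : c2 ≤ ψ c2) : ∃ y ∈ Set.Icc s t, ψ y = y := by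
  have hsub : Set.uIcc c1 c2 ⊆ Set.Icc s t := Set.uIcc_subset_Icc h1 h2
  have hφ : ContinuousOn (fun u => ψ u - u) (Set.uIcc c1 c2) :=
    (hc.mono hsub).sub continuousOn_id
  have h0 : (0:ℝ) ∈ Set.uIcc (ψ c1 - c1) (ψ c2 - c2) := by
    rw [Set.mem_uIcc]; left; constructor <;> linarith
  obtain ⟨y, hy, hy0⟩ := intermediate_value_uIcc hφ h0
  exact ⟨y, hsub hy, by dsimp at hy0; linarith⟩

/-- Subinterval mapping exactly onto [γ,δ], oriented version. -/
lemma sub_onto1 {g : ℝ → ℝ} {α β γ δ : ℝ} (hab : α ≤ β) (hgd : γ < δ)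
    (hc : ContinuousOn g (Set.Icc α β)) (ha : g α = γ) (hb : g β = δ) :
    ∃ s t, α ≤ s ∧ s ≤ t ∧ t ≤ β ∧ (∀ u ∈ Set.Icc s t, g u ∈ Set.Icc γ δ) ∧
      (∃ c ∈ Set.Icc s t, g c = γ) ∧ (∃ c ∈ Set.Icc s t, g c = δ) := by
  classical
  set A : Set ℝ := Set.Icc α β ∩ g ⁻¹' {γ} with hA
  have hAcl : IsClosed A := hc.preimage_isClosed_of_isClosed isClosed_Icc isClosed_singleton
  have hAne : A.Nonempty := ⟨α, ⟨le_refl _, hab⟩, by simp [ha]⟩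
  have hAbdd : BddAbove A := ⟨β, fun u hu => hu.1.2⟩
  set s := sSup A with hs
  have hsA : s ∈ A := hAcl.csSup_mem hAne hAbdd
  have hsαβ : s ∈ Set.Icc α β := hsA.1
  have hgs : g s = γ := hsA.2
  set B : Set ℝ := Set.Icc s β ∩ g ⁻¹' {δ} with hB
  have hBcl : IsClosed B :=
    (hc.mono (Set.Icc_subset_Icc hsαβ.1 le_rfl)).preimage_isClosed_of_isClosed
      isClosed_Icc isClosed_singleton
  have hBne : B.Nonempty := ⟨β, ⟨hsαβ.2, le_refl _⟩, by simp [hb]⟩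
  have hBbdd : BddBelow B := ⟨s, fun u hu => hu.1.1⟩
  set t := sInf B with ht
  have htB : t ∈ B := hBcl.csInf_mem hBne hBbdd
  have hst : s ≤ t := htB.1.1
  have htβ : t ≤ β := htB.1.2
  have hgt : g t = δ := htB.2
  refine ⟨s, t, hsαβ.1, hst, htβ, ?_, ⟨s, ⟨le_refl _, hst⟩, hgs⟩, ⟨t, ⟨hst, le_refl _⟩, hgt⟩⟩
  intro u hu
  constructor
  · by_contra hlt
    push_neg at hlt
    have hut : u ≤ t := hu.2
    have hcut : ContinuousOn g (Set.Icc u t) :=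
      hc.mono (Set.Icc_subset_Icc (le_trans hsαβ.1 hu.1) htβ)
    have : γ ∈ Set.Icc (g u) (g t) := ⟨le_of_lt hlt, by rw [hgt]; exact le_of_lt hgd⟩
    obtain ⟨c, hcm, hgc⟩ := intermediate_value_Icc hut hcut this
    have hcA : c ∈ A := ⟨⟨le_trans hsαβ.1 (le_trans hu.1 hcm.1), le_trans hcm.2 htβ⟩, by simp [hgc]⟩
    have : c ≤ s := le_csSup hAbdd hcA
    have : u ≤ s := le_trans hcm.1 this
    have hus : u = s := le_antisymm this hu.1
    rw [hus, hgs] at hlt; exact lt_irrefl _ hlt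
  · by_contra hlt
    push_neg at hlt
    have hsu : s ≤ u := hu.1
    have hcut : ContinuousOn g (Set.Icc s u) :=
      hc.mono (Set.Icc_subset_Icc hsαβ.1 (le_trans hu.2 htβ))
    have : δ ∈ Set.Icc (g s) (g u) := ⟨by rw [hgs]; exact le_of_lt hgd, le_of_lt hlt⟩
    obtain ⟨c, hcm, hgc⟩ := intermediate_value_Icc hsu hcut this
    have hcB : c ∈ B := ⟨⟨hcm.1, le_trans (le_trans hcm.2 hu.2) htβ⟩, by simp [hgc]⟩
    have : t ≤ c := csInf_le hBbdd hcB
    have : t ≤ u := le_trans this hcm.2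
    have hut : u = t := le_antisymm hu.2 this
    rw [hut, hgt] at hlt; exact lt_irrefl _ hlt

/-- Subinterval mapping into and onto [γ,δ], either orientation. -/
lemma sub_onto {g : ℝ → ℝ} {α β γ δ : ℝ} (hab : α ≤ β) (hgd : γ < δ)
    (hc : ContinuousOn g (Set.Icc α β))
    (hends : (g α = γ ∧ g β = δ) ∨ (g α = δ ∧ g β = γ)) :
    ∃ s t, α ≤ s ∧ s ≤ t ∧ t ≤ β ∧ (∀ u ∈ Set.Icc s t, g u ∈ Set.Icc γ δ) ∧
      (∃ c ∈ Set.Icc s t, g c = γ) ∧ (∃ c ∈ Set.Icc s t, g c = δ) := by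
  rcases hends with ⟨ha, hb⟩ | ⟨ha, hb⟩
  · exact sub_onto1 hab hgd hc ha hb
  · have hc2 : ContinuousOn (fun u => γ + δ - g u) (Set.Icc α β) := continuousOn_const.sub hc
    obtain ⟨s, t, h1, h2, h3, hrange, ⟨c1, hc1m, hc1⟩, ⟨c2, hc2m, hc2v⟩⟩ :=
      sub_onto1 hab hgd hc2 (by simp [ha]) (by simp [hb])
    refine ⟨s, t, h1, h2, h3, ?_, ⟨c2, hc2m, by linarith [hc2v]⟩,
      ⟨c1, hc1m, by linarith [hc1]⟩⟩
    intro u hu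
    have h := hrange u hu
    have h1' : γ ≤ γ + δ - g u := h.1
    have h2' : γ + δ - g u ≤ δ := h.2
    exact ⟨by linarith, by linarith⟩

lemma core {a b : ℝ} (g : ℝ → ℝ) (hc : ContinuousOn g (Set.Icc a b))
    (hm : Set.MapsTo g (Set.Icc a b) (Set.Icc a b)) {x : ℝ} (hx : x ∈ Set.Icc a b)
    (h4 : g (g (g (g x))) = x) (h2 : g (g x) ≠ x) :
    ∃ y ∈ Set.Icc a b, g (g y) = y ∧ g y ≠ y := by
  classical
  -- distinctness of the four orbit points
  have h01 : g x ≠ x := by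
    intro h; exact h2 (by rw [h, h])
  have h13 : g (g (g x)) ≠ g x := by
    intro h
    have := congrArg g h
    rw [h4] at this
    exact h2 this.symm
  have h12 : g (g x) ≠ g x := by
    intro h
    have h1 := congrArg g h
    have h2' := congrArg g h1
    rw [h4] at h2'
    rw [h1] at h2'
    exact h2 h2'.symm
  have h23 : g (g (g x)) ≠ g (g x) := by
    intro h
    have h1 := congrArg g h
    rw [h4] at h1
    rw [h] at h1
    exact h2 h1.symm
  have h30 : g (g (g x)) ≠ x := by
    intro h
    have h1 := congrArg g h
    rw [h4] at h1
    exact h01 h1.symm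
  set S : Finset ℝ := {x, g x, g (g x), g (g (g x))} with hS
  have hmemS : ∀ s : ℝ, s ∈ S ↔ s = x ∨ s = g x ∨ s = g (g x) ∨ s = g (g (g x)) := by
    intro s; simp [hS]
  have hxS : x ∈ S := by rw [hmemS]; tauto
  have hSne : S.Nonempty := ⟨x, hxS⟩
  have hfix : ∀ s ∈ S, g s ≠ s := by
    intro s hs
    rcases (hmemS s).mp hs with h | h | h | h <;> subst h
    · exact h01
    · exact h12
    · exact h23
    · intro h
      rw [h4] at h
      exact h30 h.symm
  have hmapS : ∀ s ∈ S, g s ∈ S := by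
    intro s hs
    rcases (hmemS s).mp hs with h | h | h | h <;> subst h <;> rw [hmemS]
    · tauto
    · tauto
    · tauto
    · rw [h4]; tauto
  have hiccS : ∀ s ∈ S, s ∈ Set.Icc a b := by
    intro s hs
    rcases (hmemS s).mp hs with h | h | h | h <;> subst h
    · exact hx
    · exact hm hx
    · exact hm (hm hx)
    · exact hm (hm (hm hx))
  have hg4S : ∀ s ∈ S, g (g (g (g s))) = s := by
    intro s hs
    rcases (hmemS s).mp hs with h | h | h | h <;> subst h
    · exact h4
    · exact congrArg g h4
    · exact congrArg g (congrArg g h4)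
    · exact congrArg g (congrArg g (congrArg g h4))
  -- the pair p < q of consecutive orbit points with g p ≥ q, g q ≤ p
  set T := S.filter (fun z => z < g z) with hT
  have hTne : T.Nonempty := by
    refine ⟨S.min' hSne, Finset.mem_filter.mpr ⟨S.min'_mem hSne, ?_⟩⟩
    have h1 := S.min'_le _ (hmapS _ (S.min'_mem hSne))
    have h2 := hfix _ (S.min'_mem hSne)
    exact lt_of_le_of_ne h1 (Ne.symm h2)
  set p := T.max' hTne with hpdef
  have hpT : p ∈ T := T.max'_mem hTne
  have hpS : p ∈ S := (Finset.mem_filter.mp hpT).1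
  have hpgp : p < g p := (Finset.mem_filter.mp hpT).2
  set U := S.filter (fun z => p < z) with hU
  have hUne : U.Nonempty := by
    refine ⟨S.max' hSne, Finset.mem_filter.mpr ⟨S.max'_mem hSne, ?_⟩⟩
    have h1 := S.le_max' _ (hmapS _ (S.max'_mem hSne))
    have h2 := hfix _ (S.max'_mem hSne)
    have hMlt : g (S.max' hSne) < S.max' hSne := lt_of_le_of_ne h1 h2
    have hpM : p ≤ S.max' hSne := S.le_max' _ hpS
    rcases eq_or_lt_of_le hpM with h | h
    · exfalso; rw [← h] at hMlt; exact absurd hpgp (not_lt.mpr (le_of_lt hMlt))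
    · exact h
  set q := U.min' hUne with hqdef
  have hqU : q ∈ U := U.min'_mem hUne
  have hqS : q ∈ S := (Finset.mem_filter.mp hqU).1
  have hpq : p < q := (Finset.mem_filter.mp hqU).2
  have hgpq : q ≤ g p := U.min'_le _ (Finset.mem_filter.mpr ⟨hmapS p hpS, hpgp⟩)
  have hgqq : g q < q := by
    have : ¬ (q < g q) := by
      intro hlt
      have : q ∈ T := Finset.mem_filter.mpr ⟨hqS, hlt⟩
      exact absurd (T.le_max' _ this) (not_le.mpr hpq)
    exact lt_of_le_of_ne (not_lt.mp this) (hfix q hqS)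
  have hgqp : g q ≤ p := by
    by_contra hlt
    push_neg at hlt
    have : g q ∈ U := Finset.mem_filter.mpr ⟨hmapS q hqS, hlt⟩
    exact absurd (U.min'_le _ this) (not_le.mpr hgqq)
  have hpab : p ∈ Set.Icc a b := hiccS p hpS
  have hqab : q ∈ Set.Icc a b := hiccS q hqS
  have hpq_sub : Set.Icc p q ⊆ Set.Icc a b := Set.Icc_subset_Icc hpab.1 hqab.2
  have hcpq : ContinuousOn g (Set.Icc p q) := hc.mono hpq_sub
  have hgg : ContinuousOn (fun u => g (g u)) (Set.Icc a b) := hc.comp hc hm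
  -- smallest fixed point z in [p,q]
  set Z := Set.Icc p q ∩ {u : ℝ | g u ≤ u} with hZdef
  have hZcl : IsClosed Z := by
    have : Z = Set.Icc p q ∩ (fun u => g u - u) ⁻¹' (Set.Iic 0) := by
      ext u; simp [hZdef, sub_nonpos]
    rw [this]
    exact (hcpq.sub continuousOn_id).preimage_isClosed_of_isClosed isClosed_Icc isClosed_Iic
  have hZne : Z.Nonempty := ⟨q, ⟨le_of_lt hpq, le_refl _⟩, le_of_lt hgqq⟩
  have hZbdd : BddBelow Z := ⟨p, fun u hu => hu.1.1⟩
  set z := sInf Z with hzdef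
  have hzZ : z ∈ Z := hZcl.csInf_mem hZne hZbdd
  have hzpq : z ∈ Set.Icc p q := hzZ.1
  have hgz_le : g z ≤ z := hzZ.2
  have hgz : g z = z := by
    obtain ⟨y, hy, hy0⟩ := intermediate_value_Icc' hzpq.1
      ((hcpq.mono (Set.Icc_subset_Icc le_rfl hzpq.2)).sub continuousOn_id)
      (Set.mem_Icc.mpr ⟨by simp; linarith, by simp; linarith⟩ :
        (0:ℝ) ∈ Set.Icc ((fun u => g u - u) z) ((fun u => g u - u) p))
    have hyfix : g y = y := by dsimp at hy0; linarith
    have hyZ : y ∈ Z := ⟨⟨hy.1, le_trans hy.2 hzpq.2⟩, le_of_eq hyfix⟩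
    have h1 : z ≤ y := csInf_le hZbdd hyZ
    have h2 : y = z := le_antisymm hy.2 h1
    rw [← h2]; exact hyfix
  have hpz : p < z := by
    rcases eq_or_lt_of_le hzpq.1 with h | h
    · exfalso; rw [← h] at hgz; exact absurd hgz (ne_of_gt hpgp)
    · exact h
  have hfree1 : ∀ u, p ≤ u → u < z → u < g u := by
    intro u hu1 hu2
    by_contra hle
    push_neg at hle
    have huZ : u ∈ Z := ⟨⟨hu1, le_trans (le_of_lt hu2) hzpq.2⟩, hle⟩
    exact absurd (csInf_le hZbdd huZ) (not_le.mpr hu2)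
  -- largest fixed point z' in [p,q]
  set Z' := Set.Icc p q ∩ {u : ℝ | u ≤ g u} with hZ'def
  have hZ'cl : IsClosed Z' := by
    have : Z' = Set.Icc p q ∩ (fun u => u - g u) ⁻¹' (Set.Iic 0) := by
      ext u; simp [hZ'def, sub_nonpos]
    rw [this]
    exact (continuousOn_id.sub hcpq).preimage_isClosed_of_isClosed isClosed_Icc isClosed_Iic
  have hZ'ne : Z'.Nonempty := ⟨p, ⟨le_refl _, le_of_lt hpq⟩, le_of_lt hpgp⟩
  have hZ'bdd : BddAbove Z' := ⟨q, fun u hu => hu.1.2⟩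
  set z' := sSup Z' with hz'def
  have hz'Z : z' ∈ Z' := hZ'cl.csSup_mem hZ'ne hZ'bdd
  have hz'pq : z' ∈ Set.Icc p q := hz'Z.1
  have hgz'_ge : z' ≤ g z' := hz'Z.2
  have hgz' : g z' = z' := by
    obtain ⟨y, hy, hy0⟩ := intermediate_value_Icc' hz'pq.2
      ((hcpq.mono (Set.Icc_subset_Icc hz'pq.1 le_rfl)).sub continuousOn_id)
      (Set.mem_Icc.mpr ⟨by simp; linarith, by simp; linarith⟩ :
        (0:ℝ) ∈ Set.Icc ((fun u => g u - u) q) ((fun u => g u - u) z'))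
    have hyfix : g y = y := by dsimp at hy0; linarith
    have hyZ : y ∈ Z' := ⟨⟨le_trans hz'pq.1 hy.1, hy.2⟩, le_of_eq hyfix.symm⟩
    have h1 : y ≤ z' := le_csSup hZ'bdd hyZ
    have h2 : y = z' := le_antisymm h1 hy.1
    rw [← h2]; exact hyfix
  have hz'q : z' < q := by
    rcases eq_or_lt_of_le hz'pq.2 with h | h
    · exfalso; rw [h] at hgz'; exact absurd hgz' (ne_of_lt hgqq)
    · exact h
  have hfree2 : ∀ u, z' < u → u ≤ q → g u < u := by
    intro u hu1 hu2
    by_contra hle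
    push_neg at hle
    have huZ : u ∈ Z' := ⟨⟨le_trans hz'pq.1 (le_of_lt hu1), hu2⟩, hle⟩
    exact absurd (le_csSup hZ'bdd huZ) (not_le.mpr hu1)
  have hzz' : z ≤ z' := le_csSup hZ'bdd ⟨hzpq, le_of_eq hgz.symm⟩
  have hzq : z < q := lt_of_le_of_lt hzz' hz'q
  -- the point w with g w = q
  obtain ⟨w, hwm, hgw⟩ := intermediate_value_Icc' hzpq.1
    (hcpq.mono (Set.Icc_subset_Icc le_rfl hzpq.2))
    (Set.mem_Icc.mpr ⟨by rw [hgz]; exact le_of_lt hzq, hgpq⟩ : q ∈ Set.Icc (g z) (g p))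
  have hwz : w < z := by
    rcases eq_or_lt_of_le hwm.2 with h | h
    · exfalso; rw [h, hgz] at hgw; exact absurd hgw (ne_of_lt hzq)
    · exact h
  have hwab : w ∈ Set.Icc a b := hpq_sub ⟨hwm.1, le_trans hwm.2 hzpq.2⟩
  by_cases hww : g (g w) = w
  · exact ⟨w, hwab, hww, by rw [hgw]; exact ne_of_gt (lt_of_lt_of_le hwz (le_of_lt hzq))⟩
  have hww' : g (g w) < w :=
    lt_of_le_of_ne (by rw [hgw]; exact le_trans hgqp hwm.1) hww
  -- Claim A : g (g p) < p, else we are done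
  rcases lt_or_ge (g (g p)) p with hp2 | hp2
  swap
  · obtain ⟨y, hym, hyy⟩ := fix_of_crossing (fun u => g (g u))
      (hgg.mono (fun u hu => hpq_sub ⟨hu.1, le_trans hu.2 (le_trans hwm.2 hzpq.2)⟩))
      (⟨hwm.1, le_refl w⟩ : w ∈ Set.Icc p w) (⟨le_refl p, hwm.1⟩ : p ∈ Set.Icc p w)
      (le_of_lt hww') hp2
    have hylt : y < g y := hfree1 y hym.1 (lt_of_le_of_lt hym.2 hwz)
    exact ⟨y, hpq_sub ⟨hym.1, le_trans hym.2 (le_trans hwm.2 hzpq.2)⟩, hyy, ne_of_gt hylt⟩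
  -- the point v with g v = p
  obtain ⟨v, hvm, hgv⟩ := intermediate_value_Icc' (le_of_lt hz'q)
    (hcpq.mono (Set.Icc_subset_Icc hz'pq.1 le_rfl))
    (Set.mem_Icc.mpr ⟨hgqp, by rw [hgz']; exact le_of_lt (lt_of_lt_of_le hpz hzz')⟩ :
      p ∈ Set.Icc (g q) (g z'))
  have hz'v : z' < v := by
    rcases eq_or_lt_of_le hvm.1 with h | h
    · exfalso; rw [← h, hgz'] at hgv
      exact absurd hgv (ne_of_gt (lt_of_lt_of_le hpz hzz'))
    · exact h
  have hvab : v ∈ Set.Icc a b := hpq_sub ⟨le_trans hz'pq.1 hvm.1, hvm.2⟩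
  have hpv : p < v := lt_of_lt_of_le hpz (le_trans hzz' (le_of_lt hz'v))
  by_cases hvv : g (g v) = v
  · exact ⟨v, hvab, hvv, by rw [hgv]; exact ne_of_lt hpv⟩
  have hvv' : v < g (g v) :=
    lt_of_le_of_ne (by rw [hgv]; exact le_trans hvm.2 hgpq) (fun h => hvv h.symm)
  -- Claim B : q < g (g q), else we are done
  rcases lt_or_ge q (g (g q)) with hq2 | hq2
  swap
  · obtain ⟨y, hym, hyy⟩ := fix_of_crossing (fun u => g (g u))
      (hgg.mono (fun u hu => hpq_sub ⟨le_trans (le_trans hz'pq.1 hvm.1) hu.1, hu.2⟩))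
      (⟨hvm.2, le_refl q⟩ : q ∈ Set.Icc v q) (⟨le_refl v, hvm.2⟩ : v ∈ Set.Icc v q)
      hq2 (le_of_lt hvv')
    have hylt : g y < y := hfree2 y (lt_of_lt_of_le hz'v hym.1) hym.2
    exact ⟨y, hpq_sub ⟨le_trans (le_trans hz'pq.1 hvm.1) hym.1, hym.2⟩, hyy, ne_of_lt hylt⟩
  -- main line : the orbit is p' < p < q < q' with g² pairing p ↔ p', q ↔ q'
  set p' := g (g p) with hp'def
  set q' := g (g q) with hq'def
  have hp'S : p' ∈ S := hmapS _ (hmapS p hpS)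
  have hq'S : q' ∈ S := hmapS _ (hmapS q hqS)
  have hg4p : g (g p') = p := hg4S p hpS
  have hg4q : g (g q') = q := hg4S q hqS
  have hqq' : q < q' := hq2
  have hp'p : p' < p := hp2
  have hp'q : p' < q := lt_trans hp'p hpq
  have hp'q' : p' < q' := lt_trans hp'q hqq'
  have hpq' : p < q' := lt_trans hpq hqq'
  -- S = {p', p, q, q'}
  set Q : Finset ℝ := {p', p, q, q'} with hQdef
  have hQcard : Q.card = 4 := by
    rw [hQdef]
    rw [Finset.card_insert_of_notMem (by
      simp only [Finset.mem_insert, Finset.mem_singleton]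
      push_neg
      exact ⟨ne_of_lt hp'p, ne_of_lt hp'q, ne_of_lt hp'q'⟩)]
    rw [Finset.card_insert_of_notMem (by
      simp only [Finset.mem_insert, Finset.mem_singleton]
      push_neg
      exact ⟨ne_of_lt hpq, ne_of_lt hpq'⟩)]
    rw [Finset.card_insert_of_notMem (by
      simp only [Finset.mem_singleton]
      exact ne_of_lt hqq')]
    rw [Finset.card_singleton]
  have hScard : S.card ≤ 4 := by
    rw [hS]
    refine le_trans (Finset.card_insert_le _ _) ?_
    have h3 : ({g x, g (g x), g (g (g x))} : Finset ℝ).card ≤ 3 := by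
      refine le_trans (Finset.card_insert_le _ _) ?_
      have h2' : ({g (g x), g (g (g x))} : Finset ℝ).card ≤ 2 := by
        refine le_trans (Finset.card_insert_le _ _) ?_
        simp
      omega
    omega
  have hQsub : Q ⊆ S := by
    intro u hu
    rw [hQdef] at hu
    simp only [Finset.mem_insert, Finset.mem_singleton] at hu
    rcases hu with h | h | h | h <;> subst h
    · exact hp'S
    · exact hpS
    · exact hqS
    · exact hq'S
  have hQS : Q = S := Finset.eq_of_subset_of_card_le hQsub (by omega)
  have hclass : ∀ s ∈ S, s = p' ∨ s = p ∨ s = q ∨ s = q' := by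
    intro s hs
    rw [← hQS, hQdef] at hs
    simpa using hs
  have hgpC : g p = q ∨ g p = q' := by
    rcases hclass (g p) (hmapS p hpS) with h | h | h | h
    · exfalso; rw [h] at hgpq; exact absurd hgpq (not_le.mpr hp'q)
    · exfalso; rw [h] at hgpq; exact absurd hgpq (not_le.mpr hpq)
    · exact Or.inl h
    · exact Or.inr h
  have hgqC : g q = p' ∨ g q = p := by
    rcases hclass (g q) (hmapS q hqS) with h | h | h | h
    · exact Or.inl h
    · exact Or.inr h
    · exfalso; rw [h] at hgqp; exact absurd hgqp (not_le.mpr hpq)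
    · exfalso; rw [h] at hgqp; exact absurd hgqp (not_le.mpr hpq')
  have hends1 : (g p' = q ∧ g p = q') ∨ (g p' = q' ∧ g p = q) := by
    have hgp' : g p' = g (g (g p)) := rfl
    rcases hgpC with h | h
    · right
      constructor
      · rw [hgp', h]
      · exact h
    · left
      constructor
      · rw [hgp', h]; exact hg4q
      · exact h
  have hends2 : (g q' = p ∧ g q = p') ∨ (g q' = p' ∧ g q = p) := by
    have hgq' : g q' = g (g (g q)) := rfl
    rcases hgqC with h | h
    · left
      constructor
      · rw [hgq', h]; exact hg4p
      · exact h
    · right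
      constructor
      · rw [hgq', h]
      · exact h
  -- extract the subinterval of [p', p] that maps exactly onto [q, q']
  have hp'ab : p' ∈ Set.Icc a b := hiccS _ hp'S
  have hp'p_sub : Set.Icc p' p ⊆ Set.Icc a b := Set.Icc_subset_Icc hp'ab.1 hpab.2
  obtain ⟨s, t, hs1, hst, ht1, hrange, ⟨cq, hcqm, hcq⟩, ⟨cq', hcq'm, hcq'⟩⟩ :=
    sub_onto (le_of_lt hp'p) hqq' (hc.mono hp'p_sub)
      (by rcases hends1 with ⟨h1, h2⟩ | ⟨h1, h2⟩
          · exact Or.inl ⟨h1, h2⟩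
          · exact Or.inr ⟨h1, h2⟩)
  have hst_sub : Set.Icc s t ⊆ Set.Icc a b :=
    fun u hu => hp'p_sub ⟨le_trans hs1 hu.1, le_trans hu.2 ht1⟩
  obtain ⟨cL, hcLm, hcL⟩ : ∃ c ∈ Set.Icc s t, g (g c) = p' := by
    rcases hends2 with ⟨h1, h2⟩ | ⟨h1, h2⟩
    · exact ⟨cq, hcqm, by rw [hcq]; exact h2⟩
    · exact ⟨cq', hcq'm, by rw [hcq']; exact h1⟩
  obtain ⟨cH, hcHm, hcH⟩ : ∃ c ∈ Set.Icc s t, g (g c) = p := by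
    rcases hends2 with ⟨h1, h2⟩ | ⟨h1, h2⟩
    · exact ⟨cq', hcq'm, by rw [hcq']; exact h1⟩
    · exact ⟨cq, hcqm, by rw [hcq]; exact h2⟩
  obtain ⟨y, hym, hyy⟩ := fix_of_crossing (fun u => g (g u)) (hgg.mono hst_sub)
    hcLm hcHm (by show g (g cL) ≤ cL; rw [hcL]; exact le_trans hs1 hcLm.1)
    (by show cH ≤ g (g cH); rw [hcH]; exact le_trans hcHm.2 ht1)
  have hgy : g y ∈ Set.Icc q q' := hrange y hym
  have hylt : y < g y :=
    lt_of_le_of_lt (le_trans hym.2 ht1) (lt_of_lt_of_le hpq hgy.1)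
  exact ⟨y, hst_sub hym, hyy, ne_of_gt hylt⟩

lemma iter_contOn {a b : ℝ} (f : ℝ → ℝ) (hf : ContinuousOn f (Set.Icc a b))
    (hmaps : Set.MapsTo f (Set.Icc a b) (Set.Icc a b)) :
    ∀ n, ContinuousOn (f^[n]) (Set.Icc a b) := by
  intro n
  induction n with
  | zero => simpa using continuousOn_id
  | succ n ih =>
    rw [Function.iterate_succ']
    exact hf.comp ih (hmaps.iterate n)

/-- `x` has least period `m` under `f`. -/
def IsLeastPeriod (f : ℝ → ℝ) (x : ℝ) (m : ℕ) : Prop :=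
  0 < m ∧ f^[m] x = x ∧ ∀ k, 0 < k → k < m → f^[k] x ≠ x

/-- If a continuous self-map of a compact interval has a periodic point of
least period `2^k` for some `k ≥ 2`, then it has a periodic point of least period `2^(k-1)`. -/
theorem period_halving {a b : ℝ} (hab : a ≤ b) (f : ℝ → ℝ)
    (hf : ContinuousOn f (Set.Icc a b)) (hmaps : Set.MapsTo f (Set.Icc a b) (Set.Icc a b))
    (k : ℕ) (hk : 2 ≤ k) (h : ∃ x ∈ Set.Icc a b, IsLeastPeriod f x (2 ^ k)) :
    ∃ y ∈ Set.Icc a b, IsLeastPeriod f y (2 ^ (k - 1)) := by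
  obtain ⟨x, hx, hpos, hper, hmin⟩ := h
  set n := 2 ^ (k - 2) with hndef
  have hn4 : n * 4 = 2 ^ k := by
    rw [hndef, show (4:ℕ) = 2 * 2 from rfl, ← mul_assoc, ← pow_succ, ← pow_succ]
    congr 1
    omega
  have hn2 : n * 2 = 2 ^ (k - 1) := by
    rw [hndef, ← pow_succ]
    congr 1
    omega
  set g := f^[n] with hgdef
  have hgc : ContinuousOn g (Set.Icc a b) := iter_contOn f hf hmaps n
  have hgm : Set.MapsTo g (Set.Icc a b) (Set.Icc a b) := hmaps.iterate n
  have hit4 : ∀ u : ℝ, g (g (g (g u))) = f^[2 ^ k] u := by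
    intro u
    have : f^[n * 4] u = g^[4] u := by rw [Function.iterate_mul]
    rw [← hn4, this]
    rfl
  have hit2 : ∀ u : ℝ, g (g u) = f^[2 ^ (k - 1)] u := by
    intro u
    have : f^[n * 2] u = g^[2] u := by rw [Function.iterate_mul]
    rw [← hn2, this]
    rfl
  have h4 : g (g (g (g x))) = x := by rw [hit4]; exact hper
  have h2 : g (g x) ≠ x := by
    rw [hit2]
    exact hmin _ (Nat.pow_pos (by norm_num))
      (Nat.pow_lt_pow_right (by norm_num) (by omega))
  obtain ⟨y, hy, hyy, hyne⟩ := core g hgc hgm hx h4 h2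
  refine ⟨y, hy, Nat.pow_pos (by norm_num), by rw [← hit2]; exact hyy, ?_⟩
  intro j hj1 hj2 hjy
  have hperj : Function.IsPeriodicPt f j y := hjy
  have hper2 : Function.IsPeriodicPt f (2 ^ (k - 1)) y := by
    show f^[2 ^ (k - 1)] y = y
    rw [← hit2]; exact hyy
  have hdj : Function.minimalPeriod f y ∣ j := hperj.minimalPeriod_dvd
  have hd2 : Function.minimalPeriod f y ∣ 2 ^ (k - 1) := hper2.minimalPeriod_dvd
  obtain ⟨i, hik, hdi⟩ := (Nat.dvd_prime_pow Nat.prime_two).mp hd2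
  have hdle : Function.minimalPeriod f y ≤ j := Nat.le_of_dvd hj1 hdj
  have hilt : i < k - 1 := by
    by_contra hge
    push_neg at hge
    have : i = k - 1 := le_antisymm hik hge
    rw [this] at hdi
    omega
  have hdvd_n : Function.minimalPeriod f y ∣ n := by
    rw [hdi, hndef]
    exact pow_dvd_pow 2 (by omega)
  obtain ⟨c, hc⟩ := hdvd_n
  have : Function.IsPeriodicPt f n y := by
    rw [hc]
    exact (Function.isPeriodicPt_minimalPeriod f y).mul_const c
  exact hyne this
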